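/- Let N ≥ 1 be a natural number, C₀ > 0, m > 0 with N·m ≤ C₀, ε ∈ (0,1], and let a₁, …, a_N be nonnegative real numbers with ∑_{j=1}^N a_j² ≤ 1. Suppose that the number of indices j with ε²·m ≤ a_j² ≤ m/ε² is at most ε²·N. Then m^{1/2} · ∑_{j=1}^N a_j ≤ (1 + C₀ + √C₀) · ε. -/
import Mathlib


/-- Let `N ≥ 1`, `C₀ > 0`, `m > 0` with `N·m ≤ C₀`, `ε ∈ (0,1]`, and let
`a₁, …, a_N ≥ 0` with `∑ a_j² ≤ 1`. If the number of indices `j` with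
`ε²·m ≤ a_j² ≤ m/ε²` is at most `ε²·N`, then `m^{1/2} · ∑ a_j ≤ (1 + C₀ + √C₀) · ε`. -/
theorem stmt11
    (N : ℕ) (hN : 1 ≤ N)
    (C₀ m : ℝ) (hC₀ : 0 < C₀) (hm : 0 < m) (hNm : (N : ℝ) * m ≤ C₀)
    (ε : ℝ) (hε : 0 < ε) (hε1 : ε ≤ 1)
    (a : Fin N → ℝ) (ha : ∀ j, 0 ≤ a j)
    (hsum : ∑ j, (a j) ^ 2 ≤ 1)
    (hcount : (({j : Fin N | ε ^ 2 * m ≤ (a j) ^ 2 ∧ (a j) ^ 2 ≤ m / ε ^ 2}).ncard : ℝ)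
      ≤ ε ^ 2 * N) :
    Real.sqrt m * ∑ j, a j ≤ (1 + C₀ + Real.sqrt C₀) * ε := by
  classical
  have hsm : (0:ℝ) ≤ Real.sqrt m := Real.sqrt_nonneg m
  set L : Finset (Fin N) := Finset.univ.filter (fun j => (a j)^2 < ε^2 * m) with hLdef
  set Md : Finset (Fin N) := Finset.univ.filter
    (fun j => ε^2*m ≤ (a j)^2 ∧ (a j)^2 ≤ m / ε^2) with hMdef
  set H : Finset (Fin N) := Finset.univ.filter (fun j => m / ε^2 < (a j)^2) with hHdef
  -- split
  have hsplit : ∑ j, a j = (∑ j ∈ L, a j) + ((∑ j ∈ Md, a j) + ∑ j ∈ H, a j) := by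
    rw [← Finset.sum_filter_add_sum_filter_not Finset.univ (fun j => (a j)^2 < ε^2 * m) a]
    congr 1
    rw [← Finset.sum_filter_add_sum_filter_not
      (Finset.univ.filter (fun j => ¬ (a j)^2 < ε^2 * m)) (fun j => (a j)^2 ≤ m / ε^2) a,
      Finset.filter_filter, Finset.filter_filter]
    congr 1
    · apply Finset.sum_congr _ (fun _ _ => rfl)
      apply Finset.filter_congr
      intro j _
      simp only [not_lt]
    · apply Finset.sum_congr _ (fun _ _ => rfl)
      apply Finset.filter_congr
      intro j _
      simp only [not_lt, not_le]
      have hε2 : ε^2 ≤ 1 := by nlinarith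
      have hmd : m ≤ m / ε^2 := by
        rw [le_div_iff₀ (by positivity)]; nlinarith
      constructor
      · rintro ⟨_, h2⟩; exact h2
      · intro h2
        refine ⟨?_, h2⟩
        nlinarith
  -- bound on L
  have hLbound : Real.sqrt m * ∑ j ∈ L, a j ≤ C₀ * ε := by
    have h1 : ∑ j ∈ L, a j ≤ L.card * (ε * Real.sqrt m) := by
      rw [← nsmul_eq_mul, ← Finset.sum_const]
      apply Finset.sum_le_sum
      intro j hj
      simp only [hLdef, Finset.mem_filter] at hj
      have : a j ≤ Real.sqrt (ε^2 * m) := by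
        rw [← Real.sqrt_sq (ha j)]
        exact Real.sqrt_le_sqrt hj.2.le
      rwa [Real.sqrt_mul (by positivity), Real.sqrt_sq hε.le] at this
    have hcard : (L.card : ℝ) ≤ N := by
      have : L.card ≤ N := by simpa using Finset.card_le_univ L
      exact_mod_cast this
    calc Real.sqrt m * ∑ j ∈ L, a j ≤ Real.sqrt m * (N * (ε * Real.sqrt m)) := by
          apply mul_le_mul_of_nonneg_left _ hsm
          refine h1.trans ?_
          apply mul_le_mul_of_nonneg_right hcard (by positivity)
      _ = (N * m) * ε := by
          rw [show Real.sqrt m * ((N:ℝ) * (ε * Real.sqrt m)) = (N:ℝ) * (Real.sqrt m * Real.sqrt m) * ε by ring,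
            Real.mul_self_sqrt hm.le]
      _ ≤ C₀ * ε := by nlinarith
  -- bound on Md
  have hMcard : (Md.card : ℝ) ≤ ε^2 * N := by
    have : {j : Fin N | ε ^ 2 * m ≤ (a j) ^ 2 ∧ (a j) ^ 2 ≤ m / ε ^ 2}.ncard = Md.card := by
      rw [Set.ncard_eq_toFinset_card']
      congr 1
      ext j
      simp [hMdef]
    rw [this] at hcount
    exact hcount
  have hMbound : Real.sqrt m * ∑ j ∈ Md, a j ≤ Real.sqrt C₀ * ε := by
    have hcs : (∑ j ∈ Md, a j)^2 ≤ Md.card * ∑ j ∈ Md, (a j)^2 := sq_sum_le_card_mul_sum_sq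
    have hsub : ∑ j ∈ Md, (a j)^2 ≤ 1 :=
      le_trans (Finset.sum_le_sum_of_subset_of_nonneg (Finset.subset_univ _)
        (fun j _ _ => sq_nonneg _)) hsum
    have h2 : (∑ j ∈ Md, a j)^2 ≤ ε^2 * N := by
      calc (∑ j ∈ Md, a j)^2 ≤ Md.card * ∑ j ∈ Md, (a j)^2 := hcs
        _ ≤ (ε^2 * N) * 1 := by
            apply mul_le_mul hMcard hsub (Finset.sum_nonneg fun j _ => sq_nonneg _) (by positivity)
        _ = ε^2 * N := by ring
    have h3 : (Real.sqrt m * ∑ j ∈ Md, a j)^2 ≤ C₀ * ε^2 := by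
      rw [mul_pow, Real.sq_sqrt hm.le]
      calc m * (∑ j ∈ Md, a j)^2 ≤ m * (ε^2 * N) := by
            exact mul_le_mul_of_nonneg_left h2 hm.le
        _ = (N * m) * ε^2 := by ring
        _ ≤ C₀ * ε^2 := by nlinarith
    have h4 : (0:ℝ) ≤ Real.sqrt m * ∑ j ∈ Md, a j :=
      mul_nonneg hsm (Finset.sum_nonneg fun j _ => ha j)
    have h5 : (Real.sqrt C₀ * ε)^2 = C₀ * ε^2 := by
      rw [mul_pow, Real.sq_sqrt hC₀.le]
    nlinarith [Real.sqrt_nonneg C₀, mul_nonneg (Real.sqrt_nonneg C₀) hε.le, sq_nonneg (Real.sqrt m * ∑ j ∈ Md, a j - Real.sqrt C₀ * ε)]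
  -- bound on H
  have hHbound : Real.sqrt m * ∑ j ∈ H, a j ≤ ε := by
    have hHcard : (H.card : ℝ) * (m / ε^2) ≤ 1 := by
      have : (H.card : ℝ) * (m / ε^2) ≤ ∑ j ∈ H, (a j)^2 := by
        rw [← nsmul_eq_mul, ← Finset.sum_const]
        apply Finset.sum_le_sum
        intro j hj
        simp only [hHdef, Finset.mem_filter] at hj
        exact hj.2.le
      refine this.trans ?_
      exact le_trans (Finset.sum_le_sum_of_subset_of_nonneg (Finset.subset_univ _)
        (fun j _ _ => sq_nonneg _)) hsum
    have hcs : (∑ j ∈ H, a j)^2 ≤ H.card * ∑ j ∈ H, (a j)^2 := sq_sum_le_card_mul_sum_sq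
    have hsub : ∑ j ∈ H, (a j)^2 ≤ 1 :=
      le_trans (Finset.sum_le_sum_of_subset_of_nonneg (Finset.subset_univ _)
        (fun j _ _ => sq_nonneg _)) hsum
    have h2 : (∑ j ∈ H, a j)^2 ≤ ε^2 / m := by
      have hc : (H.card : ℝ) ≤ ε^2 / m := by
        rw [le_div_iff₀ hm]
        calc (H.card:ℝ) * m = (H.card:ℝ) * (m/ε^2) * ε^2 := by field_simp
          _ ≤ 1 * ε^2 := mul_le_mul_of_nonneg_right hHcard (by positivity)
          _ = ε^2 := one_mul _
      calc (∑ j ∈ H, a j)^2 ≤ H.card * ∑ j ∈ H, (a j)^2 := hcs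
        _ ≤ (ε^2/m) * 1 := mul_le_mul hc hsub (Finset.sum_nonneg fun j _ => sq_nonneg _) (by positivity)
        _ = ε^2/m := by ring
    have h3 : (Real.sqrt m * ∑ j ∈ H, a j)^2 ≤ ε^2 := by
      rw [mul_pow, Real.sq_sqrt hm.le]
      calc m * (∑ j ∈ H, a j)^2 ≤ m * (ε^2/m) := mul_le_mul_of_nonneg_left h2 hm.le
        _ = ε^2 := by field_simp
    have h4 : (0:ℝ) ≤ Real.sqrt m * ∑ j ∈ H, a j :=
      mul_nonneg hsm (Finset.sum_nonneg fun j _ => ha j)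
    nlinarith
  calc Real.sqrt m * ∑ j, a j
      = Real.sqrt m * ∑ j ∈ L, a j + (Real.sqrt m * ∑ j ∈ Md, a j + Real.sqrt m * ∑ j ∈ H, a j) := by
        rw [hsplit]; ring
    _ ≤ C₀ * ε + (Real.sqrt C₀ * ε + ε) := by
        gcongr
    _ = (1 + C₀ + Real.sqrt C₀) * ε := by ring
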